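/- Let p be an odd prime and k an integer with 1 \le k \le (p-1)/2. Then \binom{(p-1)/2}{k} \equiv \binom{2k}{k}/(-4)^k \cdot (1 - p \sum_{i=1}^{k} 1/(2i-1)) \pmod{p^2}, as a congruence between p-integral rationals. -/

import Mathlib

open Finset

/-- `a ≡ b (mod p^k)` as rationals: `a - b` is `p^k` times a `p`-integral rational. -/
def ratCongr (p k : ℕ) (a b : ℚ) : Prop :=
  ∃ c : ℚ, a - b = (p : ℚ) ^ k * c ∧ ¬ (p ∣ c.den)

lemma factTwoMul (k : ℕ) :
    (2*k).factorial = 2^k * k.factorial * ∏ i ∈ range k, (2*i+1) := by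
  induction k with
  | zero => simp
  | succ n ih =>
    rw [show 2*(n+1) = (2*n+1)+1 from by ring, Nat.factorial_succ, Nat.factorial_succ, ih,
      prod_range_succ, Nat.factorial_succ]
    ring

lemma keyQ (x : ℤ) (a : ℕ → ℤ) (ha : ∀ i, (a i : ℚ) ≠ 0) (s : Finset ℕ) :
    ∃ N M : ℤ,
      (∏ i ∈ s, ((x:ℚ) - a i)) - (∏ i ∈ s, (-(a i : ℚ))) *
          (1 - (x:ℚ) * ∑ i ∈ s, (a i : ℚ)⁻¹) = (x:ℚ)^2 * N ∧
      (∏ i ∈ s, (-(a i : ℚ))) * ∑ i ∈ s, (a i : ℚ)⁻¹ = M := by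
  classical
  induction s using Finset.induction_on with
  | empty => exact ⟨0, 0, by simp, by simp⟩
  | @insert j s hj ih =>
    obtain ⟨N, M, hN, hM⟩ := ih
    have h1 : (a j : ℚ) * (a j : ℚ)⁻¹ = 1 := mul_inv_cancel₀ (ha j)
    refine ⟨(x - a j)*N - M, -(a j)*M - ∏ i ∈ s, -(a i), ?_, ?_⟩
    · rw [prod_insert hj, prod_insert hj, sum_insert hj]
      push_cast
      linear_combination ((x:ℚ) - a j) * hN - (x:ℚ)^2 * hM
        - (x:ℚ) * (∏ i ∈ s, (-(a i:ℚ))) * h1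
    · rw [prod_insert hj, sum_insert hj]
      push_cast
      linear_combination (-(a j:ℚ)) * hM - (∏ i ∈ s, (-(a i:ℚ))) * h1

theorem stmt2 (p : ℕ) (hp : p.Prime) (hodd : p ≠ 2) (k : ℕ) (hk1 : 1 ≤ k)
    (hk2 : k ≤ (p - 1) / 2) :
    ratCongr p 2 (((p - 1) / 2).choose k : ℚ)
      (((2 * k).choose k : ℚ) / (-4 : ℚ) ^ k *
        (1 - (p : ℚ) * ∑ i ∈ Finset.Icc 1 k, 1 / (2 * (i : ℚ) - 1))) := by
  obtain ⟨m, hm⟩ := hp.odd_of_ne_two hodd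
  have hp2 : 2 ≤ p := hp.two_le
  have hm2 : (p - 1) / 2 = m := by omega
  have hkm : k ≤ m := by omega
  have hkp : k < p := by omega
  have hfac : (k.factorial : ℚ) ≠ 0 := by positivity
  have h2k : (2:ℚ)^k ≠ 0 := by positivity
  -- h1 : choose m k
  have h1 : ((m.choose k : ℕ) : ℚ)
      = (∏ i ∈ range k, ((p:ℚ) - (2*i+1))) / (2^k * k.factorial) := by
    have hdesc : ((m.descFactorial k : ℕ) : ℚ) = ∏ i ∈ range k, ((m:ℚ) - i) := by
      rw [Nat.descFactorial_eq_prod_range, Nat.cast_prod]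
      exact Finset.prod_congr rfl fun i hi => by
        rw [Nat.cast_sub ((mem_range.mp hi).le.trans hkm)]
    have hch : ((m.descFactorial k : ℕ) : ℚ) = k.factorial * m.choose k := by
      rw [Nat.descFactorial_eq_factorial_mul_choose]; push_cast; ring
    have hpQ : (p:ℚ) = 2*(m:ℚ)+1 := by exact_mod_cast congrArg (Nat.cast : ℕ → ℚ) hm
    have hprod : ∏ i ∈ range k, ((p:ℚ) - (2*i+1)) = 2^k * ∏ i ∈ range k, ((m:ℚ) - i) :=
      calc ∏ i ∈ range k, ((p:ℚ) - (2*i+1))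
          = ∏ i ∈ range k, (2 * ((m:ℚ) - i)) :=
            Finset.prod_congr rfl fun i _ => by rw [hpQ]; ring
        _ = 2^k * ∏ i ∈ range k, ((m:ℚ) - i) := by
            rw [prod_mul_distrib, prod_const, card_range]
    rw [hprod, ← hdesc, hch]
    field_simp
  -- h2 : central binomial
  have h2 : ((2*k).choose k : ℚ) / (-4:ℚ)^k
      = (∏ i ∈ range k, (-(2*(i:ℚ)+1))) / (2^k * k.factorial) := by
    have hc : ((2*k).choose k : ℚ) = ((2*k).factorial : ℚ) / (k.factorial * k.factorial) := by
      rw [Nat.cast_choose ℚ (by omega : k ≤ 2*k), show 2*k - k = k from by omega]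
    have hf : ((2*k).factorial : ℚ) = 2^k * k.factorial * ∏ i ∈ range k, (2*(i:ℚ)+1) := by
      rw [factTwoMul]; push_cast; ring
    have hneg : ∏ i ∈ range k, (-(2*(i:ℚ)+1)) = (-1)^k * ∏ i ∈ range k, (2*(i:ℚ)+1) :=
      calc ∏ i ∈ range k, (-(2*(i:ℚ)+1))
          = ∏ i ∈ range k, ((-1) * (2*(i:ℚ)+1)) := Finset.prod_congr rfl fun i _ => by ring
        _ = (-1)^k * ∏ i ∈ range k, (2*(i:ℚ)+1) := by
            rw [prod_mul_distrib, prod_const, card_range]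
    rw [hc, hf, hneg, show (-4:ℚ)^k = (-1)^k * 2^k * 2^k from by
      rw [show (-4:ℚ) = (-1) * 2 * 2 from by norm_num, mul_pow, mul_pow]]
    have h4 : ((-1:ℚ))^k ≠ 0 := pow_ne_zero k (by norm_num)
    field_simp
    ring_nf
    have he : ((-1:ℚ))^(k*2) = 1 := by rw [mul_comm, pow_mul]; norm_num
    have hpp : ∏ x ∈ range k, (1 + (x:ℚ)*2) = ∏ x ∈ range k, (2*(x:ℚ)+1) :=
      Finset.prod_congr rfl fun i _ => by ring
    rw [he]
  -- h3 : sum reindex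
  have h3 : ∑ i ∈ Finset.Icc 1 k, 1 / (2 * (i : ℚ) - 1)
      = ∑ i ∈ range k, (2*(i:ℚ)+1)⁻¹ := by
    rw [← Finset.Ico_add_one_right_eq_Icc, Finset.sum_Ico_eq_sum_range]
    refine Finset.sum_congr rfl fun i _ => ?_
    rw [one_div]
    congr 1
    push_cast
    ring
  have ha : ∀ i : ℕ, (((2*(i:ℤ)+1 : ℤ)) : ℚ) ≠ 0 := by
    intro i; push_cast; positivity
  obtain ⟨N, M, hN, -⟩ := keyQ p (fun i => 2*i+1) ha (range k)
  have hN' : (∏ i ∈ range k, ((p:ℚ) - (2*(i:ℚ)+1)))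
      - (∏ i ∈ range k, (-(2*(i:ℚ)+1))) * (1 - (p:ℚ) * ∑ i ∈ range k, (2*(i:ℚ)+1)⁻¹)
      = (p:ℚ)^2 * N := by
    push_cast at hN
    convert hN using 4
  refine ⟨(N:ℚ) / ((2^k * k.factorial : ℕ) : ℚ), ?_, ?_⟩
  · rw [hm2, h1, h2, h3]
    push_cast
    linear_combination (1/((2:ℚ)^k * k.factorial)) * hN'
  · intro hdvd
    have hden : ((N:ℚ) / ((2^k * k.factorial : ℕ) : ℚ)).den ∣ 2^k * k.factorial := by
      have h := Rat.den_dvd N ((2^k * k.factorial : ℕ) : ℤ)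
      rw [Rat.divInt_eq_div] at h
      have h2 : (((N:ℚ) / ((2^k * k.factorial : ℕ) : ℚ)).den : ℤ) ∣ ((2^k * k.factorial : ℕ) : ℤ) := by
        exact_mod_cast h
      exact_mod_cast h2
    have hpd : p ∣ 2^k * k.factorial := dvd_trans hdvd hden
    rcases (Nat.Prime.dvd_mul hp).mp hpd with h | h
    · exact hodd (Nat.eq_of_dvd_of_lt_two_mul (by norm_num) (hp.dvd_of_dvd_pow h) (by omega)).symm
    · exact absurd ((Nat.Prime.dvd_factorial hp).mp h) (by omega)
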